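/- Let X be a finite nonempty set, let τ > 0, and let Z and Z' be neighboring finite multisets of vectors z : X → ℝ with |Z| ≥ 3 and |Z'| ≥ 3. Then for every x ∈ X, α(Z, x) ≤ softmax_τ(med(Z))(x) / softmax_τ(med(Z'))(x) ≤ β(Z, x). -/

import Mathlib

open Real

/-- The left-median of a finite multiset of reals (see context):
    for sorted values `s_1 ≤ … ≤ s_N`, this is `s_k` when `N = 2k` or `N = 2k+1` (`N ≥ 2`),
    and `s_1` when `N = 1`. (0-indexed: `N/2 - 1`.) -/
noncomputable def leftmed (S : Multiset ℝ) : ℝ :=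
  if S.card = 1 then (S.sort (· ≤ ·)).getD 0 0
  else (S.sort (· ≤ ·)).getD (S.card / 2 - 1) 0

/-- The right-median: `s_{k+1}` when `N = 2k`, `s_{k+2}` when `N = 2k+1 ≥ 3`, `s_1` when `N = 1`. -/
noncomputable def rightmed (S : Multiset ℝ) : ℝ :=
  if S.card = 1 then (S.sort (· ≤ ·)).getD 0 0
  else if S.card % 2 = 0 then (S.sort (· ≤ ·)).getD (S.card / 2) 0
  else (S.sort (· ≤ ·)).getD (S.card / 2 + 1) 0

/-- The median: `(s_k + s_{k+1})/2` when `N = 2k`, `s_{k+1}` when `N = 2k+1`. -/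
noncomputable def med (S : Multiset ℝ) : ℝ :=
  if S.card = 1 then (S.sort (· ≤ ·)).getD 0 0
  else if S.card % 2 = 0 then
    ((S.sort (· ≤ ·)).getD (S.card / 2 - 1) 0 + (S.sort (· ≤ ·)).getD (S.card / 2) 0) / 2
  else (S.sort (· ≤ ·)).getD (S.card / 2) 0
/-- Two finite multisets are neighbors if one is obtained from the other by adding a single
    element (equivalently their symmetric difference has size 1). -/
def Neighbors {α : Type*} (Z Z' : Multiset α) : Prop :=
  (∃ a, Z' = a ::ₘ Z) ∨ (∃ a, Z = a ::ₘ Z')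

/-- The multiset `Z^{(x)}` of `x`-th components of a multiset of vectors. -/
def compAt {X : Type*} (Z : Multiset (X → ℝ)) (x : X) : Multiset ℝ :=
  Z.map (fun z => z x)

/-- Componentwise left-median of a multiset of vectors. -/
noncomputable def leftmedVec {X : Type*} (Z : Multiset (X → ℝ)) : X → ℝ :=
  fun x => leftmed (compAt Z x)

/-- Componentwise median of a multiset of vectors. -/
noncomputable def medVec {X : Type*} (Z : Multiset (X → ℝ)) : X → ℝ :=
  fun x => med (compAt Z x)

/-- Componentwise right-median of a multiset of vectors. -/
noncomputable def rightmedVec {X : Type*} (Z : Multiset (X → ℝ)) : X → ℝ :=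
  fun x => rightmed (compAt Z x)
/-- `softmax_τ(z)(x) = exp(z_x/τ) / Σ_y exp(z_y/τ)`. -/
noncomputable def softmax {X : Type*} [Fintype X] (τ : ℝ) (z : X → ℝ) (x : X) : ℝ :=
  Real.exp (z x / τ) / ∑ y, Real.exp (z y / τ)
/-- `α(Z, x) = exp((z̄_x − z̄^R_x)/τ) · (Σ_y exp(z̄^L_y/τ)) / (Σ_y exp(z̄_y/τ))`
    where `z̄ = med(Z)`, `z̄^L = leftmed(Z)`, `z̄^R = rightmed(Z)`. -/
noncomputable def alpha {X : Type*} [Fintype X] (τ : ℝ) (Z : Multiset (X → ℝ)) (x : X) : ℝ :=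
  Real.exp ((medVec Z x - rightmedVec Z x) / τ) *
    (∑ y, Real.exp (leftmedVec Z y / τ)) / (∑ y, Real.exp (medVec Z y / τ))

/-- `β(Z, x) = exp((z̄_x − z̄^L_x)/τ) · (Σ_y exp(z̄^R_y/τ)) / (Σ_y exp(z̄_y/τ))`. -/
noncomputable def beta {X : Type*} [Fintype X] (τ : ℝ) (Z : Multiset (X → ℝ)) (x : X) : ℝ :=
  Real.exp ((medVec Z x - leftmedVec Z x) / τ) *
    (∑ y, Real.exp (rightmedVec Z y / τ)) / (∑ y, Real.exp (medVec Z y / τ))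

/-- Per-token privacy cost `γ(Z, x) = max(log(1/α(Z, x)), log β(Z, x))`. -/
noncomputable def gamma {X : Type*} [Fintype X] (τ : ℝ) (Z : Multiset (X → ℝ)) (x : X) : ℝ :=
  max (Real.log (1 / alpha τ Z x)) (Real.log (beta τ Z x))

lemma sorted_getD_mono (l : List ℝ) (h : l.Pairwise (· ≤ ·)) {i j : ℕ} (hij : i ≤ j)
    (hj : j < l.length) : l.getD i 0 ≤ l.getD j 0 := by
  have hi : i < l.length := lt_of_le_of_lt hij hj
  rw [List.getD_eq_getElem l 0 hi, List.getD_eq_getElem l 0 hj]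
  exact h.rel_get_of_le (a := ⟨i, hi⟩) (b := ⟨j, hj⟩) hij

lemma interleave (a : ℝ) (l : List ℝ) (hl : l.Pairwise (· ≤ ·)) :
    ∀ i, i < l.length →
      (List.orderedInsert (· ≤ ·) a l).getD i 0 ≤ l.getD i 0 ∧
      l.getD i 0 ≤ (List.orderedInsert (· ≤ ·) a l).getD (i + 1) 0 := by
  induction l with
  | nil => intro i hi; simp at hi
  | cons b l ih =>
    intro i hi
    by_cases hab : a ≤ b
    · rw [List.orderedInsert_cons_of_le _ _ hab]
      rcases Nat.eq_zero_or_pos i with rfl | hpos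
      · simpa using hab
      · obtain ⟨j, rfl⟩ := Nat.exists_eq_add_of_lt hpos
        simp only [Nat.zero_add] at *
        constructor
        · show (b :: l).getD j 0 ≤ (b :: l).getD (j+1) 0
          exact sorted_getD_mono _ hl (Nat.le_succ j) hi
        · simp
    · have hm : List.orderedInsert (· ≤ ·) a (b :: l) = b :: List.orderedInsert (· ≤ ·) a l := by
        simp [List.orderedInsert, hab]
      rw [hm]
      have hsl : l.Pairwise (· ≤ ·) := hl.of_cons
      have hms : (b :: List.orderedInsert (· ≤ ·) a l).Pairwise (· ≤ ·) := by
        rw [← hm]; exact hl.orderedInsert a _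
      rcases Nat.eq_zero_or_pos i with rfl | hpos
      · constructor
        · simp
        · show (b :: List.orderedInsert (· ≤ ·) a l).getD 0 0 ≤ _
          apply sorted_getD_mono _ hms (Nat.zero_le 1)
          simp [List.orderedInsert_length]
      · obtain ⟨j, rfl⟩ := Nat.exists_eq_add_of_lt hpos
        simp only [Nat.zero_add] at *
        have hj : j < l.length := by simpa using hi
        exact ⟨(ih hsl j hj).1, (ih hsl j hj).2⟩

lemma sort_cons_eq (a : ℝ) (S : Multiset ℝ) :
    (a ::ₘ S).sort (· ≤ ·) = List.orderedInsert (· ≤ ·) a (S.sort (· ≤ ·)) := by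
  apply List.Perm.eq_of_pairwise' (Multiset.pairwise_sort _ _)
    ((Multiset.pairwise_sort S (· ≤ ·)).orderedInsert a _) ?_
  have h1 : ((a ::ₘ S).sort (· ≤ ·) : Multiset ℝ) = a ::ₘ S := Multiset.sort_eq _ _
  have h2 : (List.orderedInsert (· ≤ ·) a (S.sort (· ≤ ·)) : Multiset ℝ) = a ::ₘ S := by
    have := List.perm_orderedInsert (· ≤ ·) a (S.sort (· ≤ ·))
    rw [Multiset.coe_eq_coe.mpr this, ← Multiset.cons_coe, Multiset.sort_eq]
  rw [← Multiset.coe_eq_coe, h1, h2]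

lemma medkey_add (S : Multiset ℝ) (a : ℝ) (hS : 2 ≤ Multiset.card S) :
    leftmed S ≤ med (a ::ₘ S) ∧ med (a ::ₘ S) ≤ rightmed S := by
  have hts : (a ::ₘ S).sort (· ≤ ·) = List.orderedInsert (· ≤ ·) a (S.sort (· ≤ ·)) :=
    sort_cons_eq a S
  set s := S.sort (· ≤ ·) with hs
  set t := (a ::ₘ S).sort (· ≤ ·) with ht
  have hsort : s.Pairwise (· ≤ ·) := Multiset.pairwise_sort _ _
  have hlen : s.length = Multiset.card S := Multiset.length_sort _
  have H : ∀ i, i < Multiset.card S →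
      t.getD i 0 ≤ s.getD i 0 ∧ s.getD i 0 ≤ t.getD (i+1) 0 := by
    intro i hi; rw [hts]; exact interleave a s hsort i (by omega)
  have h1 : ¬ Multiset.card S = 1 := by omega
  have h2 : ¬ Multiset.card S + 1 = 1 := by omega
  rcases Nat.even_or_odd (Multiset.card S) with ⟨k, hk⟩ | ⟨k, hk⟩
  · -- N = 2k even, k ≥ 1
    have hk1 : 1 ≤ k := by omega
    have hmod : Multiset.card S % 2 = 0 := by omega
    have hmod' : ¬ (Multiset.card S + 1) % 2 = 0 := by omega
    have e1 : Multiset.card S / 2 - 1 = k - 1 := by omega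
    have e2 : Multiset.card S / 2 = k := by omega
    have e3 : (Multiset.card S + 1) / 2 = k := by omega
    unfold leftmed med rightmed
    rw [if_neg h1, Multiset.card_cons, if_neg h2, if_neg hmod', if_neg h1, if_pos hmod,
      ← hs, ← ht, e1, e2, e3]
    have Hk := H k (by omega)
    have Hk1 := H (k-1) (by omega)
    rw [show k - 1 + 1 = k by omega] at Hk1
    exact ⟨Hk1.2, Hk.1⟩
  · -- N = 2k+1 odd, k ≥ 1
    have hk1 : 1 ≤ k := by omega
    have hmod : ¬ Multiset.card S % 2 = 0 := by omega
    have hmod' : (Multiset.card S + 1) % 2 = 0 := by omega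
    have e1 : Multiset.card S / 2 - 1 = k - 1 := by omega
    have e2 : Multiset.card S / 2 + 1 = k + 1 := by omega
    have e3 : (Multiset.card S + 1) / 2 - 1 = k := by omega
    have e4 : (Multiset.card S + 1) / 2 = k + 1 := by omega
    unfold leftmed med rightmed
    rw [if_neg h1, Multiset.card_cons, if_neg h2, if_pos hmod', if_neg h1, if_neg hmod,
      ← hs, ← ht, e1, e2, e3, e4]
    have Hk := H k (by omega)
    have Hk1 := H (k-1) (by omega)
    have Hk2 := H (k+1) (by omega)
    rw [show k - 1 + 1 = k by omega] at Hk1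
    have hmono : s.getD (k-1) 0 ≤ s.getD k 0 := sorted_getD_mono s hsort (by omega) (by omega)
    have hmono2 : s.getD k 0 ≤ s.getD (k+1) 0 := sorted_getD_mono s hsort (by omega) (by omega)
    constructor
    · have := Hk.2; linarith
    · have := Hk1.1; linarith

lemma medkey_rem (T : Multiset ℝ) (a : ℝ) (hT : 2 ≤ Multiset.card T) :
    leftmed (a ::ₘ T) ≤ med T ∧ med T ≤ rightmed (a ::ₘ T) := by
  have hts : (a ::ₘ T).sort (· ≤ ·) = List.orderedInsert (· ≤ ·) a (T.sort (· ≤ ·)) :=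
    sort_cons_eq a T
  set t := T.sort (· ≤ ·) with hst
  set s := (a ::ₘ T).sort (· ≤ ·) with hss
  have htsort : t.Pairwise (· ≤ ·) := Multiset.pairwise_sort _ _
  have hssort : s.Pairwise (· ≤ ·) := Multiset.pairwise_sort _ _
  have hlen : t.length = Multiset.card T := Multiset.length_sort _
  have hlens : s.length = Multiset.card T + 1 := by
    rw [hss, Multiset.length_sort, Multiset.card_cons]
  have H : ∀ i, i < Multiset.card T →
      s.getD i 0 ≤ t.getD i 0 ∧ t.getD i 0 ≤ s.getD (i+1) 0 := by
    intro i hi; rw [hts]; exact interleave a t htsort i (by omega)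
  have h1 : ¬ Multiset.card T = 1 := by omega
  have h2 : ¬ Multiset.card T + 1 = 1 := by omega
  rcases Nat.even_or_odd (Multiset.card T) with ⟨k, hk⟩ | ⟨k, hk⟩
  · -- N = 2k even, k ≥ 1; |S| = 2k+1 odd
    have hk1 : 1 ≤ k := by omega
    have hmod : Multiset.card T % 2 = 0 := by omega
    have hmod' : ¬ (Multiset.card T + 1) % 2 = 0 := by omega
    have e1 : (Multiset.card T + 1) / 2 - 1 = k - 1 := by omega
    have e2 : (Multiset.card T + 1) / 2 + 1 = k + 1 := by omega
    have e3 : Multiset.card T / 2 - 1 = k - 1 := by omega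
    have e4 : Multiset.card T / 2 = k := by omega
    unfold leftmed med rightmed
    rw [Multiset.card_cons, if_neg h2, if_neg h1, if_pos hmod, if_neg h2, if_neg hmod',
      ← hst, ← hss, e1, e2, e3, e4]
    have Hk := H k (by omega)
    have Hk1 := H (k-1) (by omega)
    rw [show k - 1 + 1 = k by omega] at Hk1
    have hm1 : s.getD (k-1) 0 ≤ s.getD k 0 := sorted_getD_mono s hssort (by omega) (by omega)
    have hm2 : s.getD k 0 ≤ s.getD (k+1) 0 := sorted_getD_mono s hssort (by omega) (by omega)
    constructor
    · have := Hk1.1; have := Hk.1; linarith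
    · have := Hk1.2; have := Hk.2; linarith
  · -- N = 2k+1 odd; |S| = 2k+2 even
    have hk1 : 1 ≤ k := by omega
    have hmod : ¬ Multiset.card T % 2 = 0 := by omega
    have hmod' : (Multiset.card T + 1) % 2 = 0 := by omega
    have e1 : (Multiset.card T + 1) / 2 - 1 = k := by omega
    have e2 : (Multiset.card T + 1) / 2 = k + 1 := by omega
    have e3 : Multiset.card T / 2 = k := by omega
    unfold leftmed med rightmed
    rw [Multiset.card_cons, if_neg h2, if_neg h1, if_neg hmod, if_neg h2, if_pos hmod',
      ← hst, ← hss, e1, e2, e3]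
    exact H k (by omega)

lemma med_between {X : Type*} (Z Z' : Multiset (X → ℝ)) (hZZ' : Neighbors Z Z')
    (hZ : 3 ≤ Multiset.card Z) (hZ' : 3 ≤ Multiset.card Z') (x : X) :
    leftmedVec Z x ≤ medVec Z' x ∧ medVec Z' x ≤ rightmedVec Z x := by
  rcases hZZ' with ⟨a, rfl⟩ | ⟨a, rfl⟩
  · have h : compAt (a ::ₘ Z) x = a x ::ₘ compAt Z x := by
      simp [compAt]
    have hc : 2 ≤ Multiset.card (compAt Z x) := by
      rw [compAt, Multiset.card_map]; omega
    have := medkey_add (compAt Z x) (a x) hc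
    simpa [leftmedVec, medVec, rightmedVec, h] using this
  · have h : compAt (a ::ₘ Z') x = a x ::ₘ compAt Z' x := by
      simp [compAt]
    have hc : 2 ≤ Multiset.card (compAt Z' x) := by
      rw [compAt, Multiset.card_map]; omega
    have := medkey_rem (compAt Z' x) (a x) hc
    simpa [leftmedVec, medVec, rightmedVec, h] using this

/-- For neighboring finite multisets `Z, Z'` of vectors in `ℝ^X` with
    `|Z| ≥ 3` and `|Z'| ≥ 3`: for every `x ∈ X`,
    `α(Z, x) ≤ softmax_τ(med(Z))(x) / softmax_τ(med(Z'))(x) ≤ β(Z, x)`. -/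
theorem alpha_le_softmax_med_ratio_le_beta
    {X : Type*} [Fintype X] [Nonempty X] (τ : ℝ) (hτ : 0 < τ)
    (Z Z' : Multiset (X → ℝ)) (hZZ' : Neighbors Z Z')
    (hZ : 3 ≤ Z.card) (hZ' : 3 ≤ Z'.card) :
    ∀ x : X,
      alpha τ Z x ≤ softmax τ (medVec Z) x / softmax τ (medVec Z') x ∧
      softmax τ (medVec Z) x / softmax τ (medVec Z') x ≤ beta τ Z x := by
  intro x
  have hbet : ∀ y, leftmedVec Z y ≤ medVec Z' y ∧ medVec Z' y ≤ rightmedVec Z y :=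
    fun y => med_between Z Z' hZZ' hZ hZ' y
  have hA : 0 < ∑ y, Real.exp (medVec Z y / τ) :=
    Finset.sum_pos (fun y _ => Real.exp_pos _) Finset.univ_nonempty
  have hratio : softmax τ (medVec Z) x / softmax τ (medVec Z') x =
      Real.exp ((medVec Z x - medVec Z' x) / τ) *
        (∑ y, Real.exp (medVec Z' y / τ)) / (∑ y, Real.exp (medVec Z y / τ)) := by
    unfold softmax
    rw [sub_div, Real.exp_sub]
    field_simp
  rw [hratio]
  have hsumL : (∑ y, Real.exp (leftmedVec Z y / τ)) ≤ ∑ y, Real.exp (medVec Z' y / τ) :=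
    Finset.sum_le_sum fun y _ =>
      Real.exp_le_exp.mpr (div_le_div_of_nonneg_right (hbet y).1 hτ.le)
  have hsumR : (∑ y, Real.exp (medVec Z' y / τ)) ≤ ∑ y, Real.exp (rightmedVec Z y / τ) :=
    Finset.sum_le_sum fun y _ =>
      Real.exp_le_exp.mpr (div_le_div_of_nonneg_right (hbet y).2 hτ.le)
  have hexpL : Real.exp ((medVec Z x - rightmedVec Z x) / τ) ≤
      Real.exp ((medVec Z x - medVec Z' x) / τ) :=
    Real.exp_le_exp.mpr (div_le_div_of_nonneg_right (by linarith [(hbet x).2]) hτ.le)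
  have hexpR : Real.exp ((medVec Z x - medVec Z' x) / τ) ≤
      Real.exp ((medVec Z x - leftmedVec Z x) / τ) :=
    Real.exp_le_exp.mpr (div_le_div_of_nonneg_right (by linarith [(hbet x).1]) hτ.le)
  constructor
  · unfold alpha
    gcongr
  · unfold beta
    gcongr
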